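/- Let G be a unimodular locally compact group with Haar measure μ acting continuously and cocompactly on a locally finite simplicial complex X with compact open simplex stabilizers. For 0 ≤ l < k and a G-invariant function f(τ,σ) on pairs of an ordered l-simplex τ contained in an ordered k-simplex σ, one has Σ_{σ ∈ Σ(k,G)} Σ_{τ ⊂ σ} f(τ,σ)/μ(G_σ) = Σ_{τ ∈ Σ(l,G)} Σ_{σ ⊃ τ} f(τ,σ)/μ(G_τ). -/

import Mathlib

/-- An abstract simplicial complex on a vertex type `V`. -/
structure SComplex (V : Type*) where
  faces : Set (Finset V)
  not_empty_mem : ∅ ∉ faces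
  down_closed : ∀ s ∈ faces, ∀ t, t ⊆ s → t ≠ ∅ → t ∈ faces

namespace SComplex

variable {V : Type*} (X : SComplex V)

/-- Local finiteness: every vertex lies in only finitely many faces. -/
def LocallyFinite : Prop := ∀ v : V, {s ∈ X.faces | v ∈ s}.Finite

/-- The group of simplicial automorphisms, as a subgroup of `Equiv.Perm V`. -/
def aut : Subgroup (Equiv.Perm V) where
  carrier := {g | ∀ s : Finset V, s ∈ X.faces ↔ s.map g.toEmbedding ∈ X.faces}
  one_mem' := by
    intro s
    have : (1 : Equiv.Perm V).toEmbedding = Function.Embedding.refl V := by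
      ext v; rfl
    rw [this, Finset.map_refl]
  mul_mem' := by
    intro a b ha hb s
    rw [hb s, ha (s.map b.toEmbedding), Finset.map_map]
    rfl
  inv_mem' := by
    intro a ha s
    have h := ha (s.map (a⁻¹ : Equiv.Perm V).toEmbedding)
    rw [Finset.map_map] at h
    have : ((a⁻¹ : Equiv.Perm V).toEmbedding.trans a.toEmbedding) =
        Function.Embedding.refl V := by
      ext v; simp
    rw [this, Finset.map_refl] at h
    exact h.symm

/-- The compact-open topology on `Equiv.Perm V` for a discrete vertex set:
the topology induced by pointwise convergence of a permutation and its inverse. -/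
def permTop (V : Type*) : TopologicalSpace (Equiv.Perm V) :=
  letI : TopologicalSpace V := ⊥
  TopologicalSpace.induced
    (fun g : Equiv.Perm V => ((g : V → V), ((g.symm : V → V)))) inferInstance

scoped instance instPermTop (V : Type*) : TopologicalSpace (Equiv.Perm V) := permTop V

/-- `K` is (the vertex set of) a finite subcomplex of `X`. -/
def IsFiniteSubcomplexVerts (K : Finset V) : Prop := ∀ v ∈ K, ({v} : Finset V) ∈ X.faces

/-- The pointwise stabilizer of a finite set of vertices in a subgroup `G ≤ Equiv.Perm V`. -/
def pointStab (G : Subgroup (Equiv.Perm V)) (K : Finset V) : Set G :=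
  {g : G | ∀ v ∈ K, (g : Equiv.Perm V) v = v}

end SComplex

section OrderedSimplices

variable {V : Type*} [DecidableEq V] (X : SComplex V)

/-- Ordered `k`-simplices of `X`: injective `(k+1)`-tuples of vertices spanning a face. -/
def SComplex.osimp (k : ℕ) : Type _ :=
  {s : Fin (k + 1) → V // Function.Injective s ∧ Finset.univ.image s ∈ X.faces}

variable {G : Type*} [Group G]

/-- The action of `g ∈ G` on ordered `k`-simplices, for an action `act` of `G` on `X`
by simplicial automorphisms. -/
def SComplex.gAct (act : G →* Equiv.Perm V) (hact : ∀ g : G, act g ∈ X.aut)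
    {k : ℕ} (g : G) (σ : X.osimp k) : X.osimp k :=
  ⟨fun i => act g (σ.1 i), by
    refine ⟨(act g).injective.comp σ.2.1, ?_⟩
    have h := ((hact g) (Finset.univ.image σ.1)).mp σ.2.2
    rw [Finset.map_eq_image] at h
    rw [Finset.image_image] at h
    convert h using 2
    rfl⟩

/-- `τ` is a face of `σ`: the vertices of `τ` are among the vertices of `σ`. -/
def SComplex.OSub {l k : ℕ} (τ : X.osimp l) (σ : X.osimp k) : Prop :=
  Set.range τ.1 ⊆ Set.range σ.1

/-- `R` is a set of representatives of the `G`-orbits on ordered `k`-simplices. -/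
def SComplex.IsOrbitReps (act : G →* Equiv.Perm V) (hact : ∀ g : G, act g ∈ X.aut)
    {k : ℕ} (R : Finset (X.osimp k)) : Prop :=
  ∀ σ : X.osimp k, ∃! σ' : X.osimp k, σ' ∈ R ∧ ∃ g : G, X.gAct act hact g σ' = σ

end OrderedSimplices

section AuxDC

open SComplex MeasureTheory

variable {V : Type*} [DecidableEq V] {X : SComplex V}
variable {G : Type*} [Group G] {act : G →* Equiv.Perm V} {hact : ∀ g : G, act g ∈ X.aut}

lemma gAct_one' {m : ℕ} (σ : X.osimp m) : X.gAct act hact 1 σ = σ :=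
  Subtype.ext (funext fun i => by simp [SComplex.gAct])

lemma gAct_mul' {m : ℕ} (g h : G) (σ : X.osimp m) :
    X.gAct act hact (g * h) σ = X.gAct act hact g (X.gAct act hact h σ) :=
  Subtype.ext (funext fun i => by simp [SComplex.gAct, map_mul])

lemma gAct_eq_iff' {m : ℕ} (g : G) (σ τ : X.osimp m) :
    X.gAct act hact g σ = τ ↔ σ = X.gAct act hact g⁻¹ τ := by
  constructor
  · rintro rfl; rw [← gAct_mul']; simp [gAct_one']
  · rintro rfl; rw [← gAct_mul']; simp [gAct_one']

lemma osub_gAct' {l k : ℕ} (g : G) {τ : X.osimp l} {σ : X.osimp k} (h : X.OSub τ σ) :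
    X.OSub (X.gAct act hact g τ) (X.gAct act hact g σ) := by
  rintro x ⟨i, rfl⟩
  obtain ⟨j, hj⟩ := h ⟨i, rfl⟩
  exact ⟨j, by show act g (σ.1 j) = act g (τ.1 i); rw [hj]⟩

lemma finite_osub_fst' {l k : ℕ} (σ : X.osimp k) : Finite {τ : X.osimp l // X.OSub τ σ} := by
  haveI : Finite (Set.range σ.1) := (Set.finite_range σ.1).to_subtype
  refine Finite.of_injective
    (fun τ => (fun i => (⟨τ.1.1 i, τ.2 ⟨i, rfl⟩⟩ : Set.range σ.1) :
      Fin (l + 1) → Set.range σ.1)) ?_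
  intro a b hab
  apply Subtype.ext; apply Subtype.ext; funext i
  exact congrArg Subtype.val (congrFun hab i)

lemma finite_osub_snd' {l k : ℕ} (hlf : X.LocallyFinite) (τ : X.osimp l) :
    Finite {σ : X.osimp k // X.OSub τ σ} := by
  classical
  set v : V := τ.1 0 with hv
  have hW : (⋃ s ∈ {s ∈ X.faces | v ∈ s}, (↑s : Set V)).Finite :=
    (hlf v).biUnion (fun s _ => s.finite_toSet)
  haveI := hW.to_subtype
  have hmem : ∀ (σ : {σ : X.osimp k // X.OSub τ σ}) (i : Fin (k + 1)),
      σ.1.1 i ∈ ⋃ s ∈ {s ∈ X.faces | v ∈ s}, (↑s : Set V) := by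
    intro σ i
    have h1 : (Finset.univ.image σ.1.1) ∈ {s ∈ X.faces | v ∈ s} := by
      refine ⟨σ.1.2.2, ?_⟩
      obtain ⟨j, hj⟩ := σ.2 ⟨0, rfl⟩
      exact Finset.mem_image.mpr ⟨j, Finset.mem_univ _, hj⟩
    exact Set.mem_biUnion h1
      (Finset.mem_coe.mpr (Finset.mem_image.mpr ⟨i, Finset.mem_univ _, rfl⟩))
  refine Finite.of_injective
    (fun σ => (fun i => ⟨σ.1.1 i, hmem σ i⟩ :
      Fin (k + 1) → (⋃ s ∈ {s ∈ X.faces | v ∈ s}, (↑s : Set V)))) ?_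
  intro a b hab
  apply Subtype.ext; apply Subtype.ext; funext i
  exact congrArg Subtype.val (congrFun hab i)

section Topo

variable [TopologicalSpace G] [IsTopologicalGroup G]

lemma isOpen_fixer' (hcont : ∀ v : V, IsOpen {g : G | act g v = v}) (v w : V) :
    IsOpen {g : G | act g v = w} := by
  by_cases h : ∃ g₀ : G, act g₀ v = w
  · obtain ⟨g₀, hg₀⟩ := h
    have hset : {g : G | act g v = w} = (fun g => g₀⁻¹ * g) ⁻¹' {g : G | act g v = v} := by
      ext g
      simp only [Set.mem_preimage, Set.mem_setOf_eq, map_mul, map_inv,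
        Equiv.Perm.mul_apply]
      constructor
      · intro hg; rw [hg, ← hg₀, Equiv.Perm.inv_def, Equiv.symm_apply_apply]
      · intro hg
        have h2 := congrArg (act g₀) hg
        rwa [Equiv.Perm.inv_def, Equiv.apply_symm_apply, hg₀] at h2
    rw [hset]
    exact (hcont v).preimage (continuous_mul_left g₀⁻¹)
  · have hset : {g : G | act g v = w} = ∅ := by
      ext g
      simp only [Set.mem_setOf_eq, Set.mem_empty_iff_false, iff_false]
      exact fun hg => h ⟨g, hg⟩
    rw [hset]; exact isOpen_empty

lemma isOpen_transporter' (hcont : ∀ v : V, IsOpen {g : G | act g v = v}) {m : ℕ}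
    (σ τ : X.osimp m) : IsOpen {g : G | X.gAct act hact g σ = τ} := by
  have hset : {g : G | X.gAct act hact g σ = τ} = ⋂ i, {g : G | act g (σ.1 i) = τ.1 i} := by
    ext g
    simp only [Set.mem_iInter, Set.mem_setOf_eq]
    constructor
    · intro h i; exact congrFun (congrArg Subtype.val h) i
    · intro h; exact Subtype.ext (funext h)
  rw [hset]
  exact isOpen_iInter_of_finite fun i => isOpen_fixer' hcont _ _

end Topo

section Meas

variable [MeasurableSpace G] [MeasurableMul G]

lemma measure_transporter_left' (μ : Measure G) [μ.IsMulLeftInvariant]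
    {m : ℕ} {σ τ : X.osimp m} {g₀ : G} (hg₀ : X.gAct act hact g₀ σ = τ) :
    μ {g : G | X.gAct act hact g σ = τ} = μ {g : G | X.gAct act hact g σ = σ} := by
  have key : ∀ g : G, (X.gAct act hact g σ = τ) ↔ (X.gAct act hact (g₀⁻¹ * g) σ = σ) := by
    intro g
    rw [gAct_mul']
    conv_rhs => rw [gAct_eq_iff']
    rw [inv_inv, hg₀]
  have hset : {g : G | X.gAct act hact g σ = τ} =
      (fun g => g₀⁻¹ * g) ⁻¹' {g : G | X.gAct act hact g σ = σ} := by
    ext g; exact key g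
  rw [hset, measure_preimage_mul]

lemma measure_transporter_right' (μ : Measure G) [μ.IsMulRightInvariant]
    {m : ℕ} {σ τ : X.osimp m} {g₀ : G} (hg₀ : X.gAct act hact g₀ σ = τ) :
    μ {g : G | X.gAct act hact g σ = τ} = μ {g : G | X.gAct act hact g τ = τ} := by
  have hστ : X.gAct act hact g₀⁻¹ τ = σ := ((gAct_eq_iff' g₀ σ τ).mp hg₀).symm
  have key : ∀ g : G, (X.gAct act hact g σ = τ) ↔ (X.gAct act hact (g * g₀⁻¹) τ = τ) := by
    intro g
    rw [gAct_mul', hστ]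
  have hset : {g : G | X.gAct act hact g σ = τ} =
      (fun g => g * g₀⁻¹) ⁻¹' {g : G | X.gAct act hact g τ = τ} := by
    ext g; exact key g
  rw [hset, measure_preimage_mul_right]

end Meas

end AuxDC

/-- The set of group elements carrying the pair `(τ₀, σ₀)` to the pair `(τ, σ)`. -/
def transA {V : Type*} [DecidableEq V] (X : SComplex V) {G : Type*} [Group G]
    (act : G →* Equiv.Perm V) (hact : ∀ g : G, act g ∈ X.aut) {l k : ℕ}
    (τ₀ τ : X.osimp l) (σ₀ σ : X.osimp k) : Set G :=
  {g : G | X.gAct act hact g τ₀ = τ ∧ X.gAct act hact g σ₀ = σ}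

section PartDC

open SComplex MeasureTheory

variable {V : Type*} [DecidableEq V] {X : SComplex V}
variable {G : Type*} [Group G] {act : G →* Equiv.Perm V} {hact : ∀ g : G, act g ∈ X.aut}
variable [TopologicalSpace G] [IsTopologicalGroup G] [MeasurableSpace G] [BorelSpace G]

lemma partition_L (hcont : ∀ v : V, IsOpen {g : G | act g v = v}) (μ : Measure G)
    {l k : ℕ} (τ₀ τ : X.osimp l) (σ : X.osimp k) (hτσ : X.OSub τ σ)
    [Fintype {σ' : X.osimp k // X.OSub τ₀ σ'}] :
    ∑ σ' : {σ' : X.osimp k // X.OSub τ₀ σ'}, μ (transA X act hact τ₀ τ σ'.1 σ) =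
      μ {g : G | X.gAct act hact g τ₀ = τ} := by
  classical
  rw [← measure_biUnion_finset ?hd ?hm]
  · congr 1
    ext g
    simp only [Set.mem_iUnion, Finset.mem_coe, Finset.mem_univ, exists_true_left,
      Set.mem_setOf_eq, exists_prop, true_and]
    constructor
    · rintro ⟨σ', hg1, _⟩
      exact hg1
    · intro hg
      have hOS : X.OSub τ₀ (X.gAct act hact g⁻¹ σ) := by
        have hτ₀ : τ₀ = X.gAct act hact g⁻¹ τ := (gAct_eq_iff' g τ₀ τ).mp hg
        rw [hτ₀]
        exact osub_gAct' g⁻¹ hτσ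
      refine ⟨⟨X.gAct act hact g⁻¹ σ, hOS⟩, hg, ?_⟩
      rw [← gAct_mul']
      simp [gAct_one']
  case hd =>
    intro σ₁ _ σ₂ _ hne
    refine Set.disjoint_left.mpr ?_
    rintro g ⟨hg1, hg2⟩ ⟨hg3, hg4⟩
    exact hne (Subtype.ext (by
      rw [(gAct_eq_iff' g σ₁.1 σ).mp hg2, (gAct_eq_iff' g σ₂.1 σ).mp hg4]))
  case hm =>
    intro σ' _
    exact ((isOpen_transporter' hcont τ₀ τ).inter (isOpen_transporter' hcont σ'.1 σ)).measurableSet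

lemma partition_R (hcont : ∀ v : V, IsOpen {g : G | act g v = v}) (μ : Measure G)
    {l k : ℕ} (τ₀ : X.osimp l) (σ' σ : X.osimp k) (hτσ' : X.OSub τ₀ σ')
    [Fintype {τ : X.osimp l // X.OSub τ σ}] :
    ∑ τ : {τ : X.osimp l // X.OSub τ σ}, μ (transA X act hact τ₀ τ.1 σ' σ) =
      μ {g : G | X.gAct act hact g σ' = σ} := by
  classical
  rw [← measure_biUnion_finset ?hd ?hm]
  · congr 1
    ext g
    simp only [Set.mem_iUnion, Finset.mem_coe, Finset.mem_univ, exists_true_left,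
      Set.mem_setOf_eq, exists_prop, true_and]
    constructor
    · rintro ⟨τ, _, hg2⟩
      exact hg2
    · intro hg
      have hOS : X.OSub (X.gAct act hact g τ₀) σ := by
        rw [← hg]
        exact osub_gAct' g hτσ'
      exact ⟨⟨X.gAct act hact g τ₀, hOS⟩, rfl, hg⟩
  case hd =>
    intro τ₁ _ τ₂ _ hne
    refine Set.disjoint_left.mpr ?_
    rintro g ⟨hg1, hg2⟩ ⟨hg3, hg4⟩
    exact hne (Subtype.ext (by rw [← hg1, ← hg3]))
  case hm =>
    intro τ _
    exact ((isOpen_transporter' hcont τ₀ τ.1).inter (isOpen_transporter' hcont σ' σ)).measurableSet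

private lemma swap_aux {α β : Type*} (Sa : Finset α) (Sb : Finset β)
    {P : α → Type*} {Q : β → Type*} (iP : ∀ a, Fintype (P a)) (iQ : ∀ b, Fintype (Q b))
    (F : (a : α) → (b : β) → P a → Q b → ℝ) :
    (∑ a ∈ Sa, ∑' p : P a, ∑ b ∈ Sb, ∑' q : Q b, F a b p q) =
      ∑ b ∈ Sb, ∑' q : Q b, ∑ a ∈ Sa, ∑' p : P a, F a b p q := by
  haveI := iP; haveI := iQ
  simp only [tsum_fintype]
  calc ∑ a ∈ Sa, ∑ p : P a, ∑ b ∈ Sb, ∑ q : Q b, F a b p q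
      = ∑ a ∈ Sa, ∑ b ∈ Sb, ∑ p : P a, ∑ q : Q b, F a b p q :=
        Finset.sum_congr rfl fun a _ => Finset.sum_comm
    _ = ∑ b ∈ Sb, ∑ a ∈ Sa, ∑ p : P a, ∑ q : Q b, F a b p q := Finset.sum_comm
    _ = ∑ b ∈ Sb, ∑ a ∈ Sa, ∑ q : Q b, ∑ p : P a, F a b p q :=
        Finset.sum_congr rfl fun b _ => Finset.sum_congr rfl fun a _ => Finset.sum_comm
    _ = ∑ b ∈ Sb, ∑ q : Q b, ∑ a ∈ Sa, ∑ p : P a, F a b p q :=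
        Finset.sum_congr rfl fun b _ => Finset.sum_comm

end PartDC

open SComplex MeasureTheory in
/-- Haar-measure double-counting (Lemma 3.3): for a unimodular locally compact group
`G` acting continuously and cocompactly on a locally finite simplicial complex with
compact open simplex stabilizers, and a `G`-invariant function `f(τ,σ)` on pairs of
an ordered `l`-simplex contained in an ordered `k`-simplex,
`Σ_{σ ∈ Σ(k,G)} Σ_{τ ⊂ σ} f(τ,σ)/μ(G_σ) = Σ_{τ ∈ Σ(l,G)} Σ_{σ ⊃ τ} f(τ,σ)/μ(G_τ)`. -/
theorem double_counting_haar {V : Type*} [DecidableEq V] (X : SComplex V)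
    (hlf : X.LocallyFinite)
    {G : Type*} [Group G] [TopologicalSpace G] [IsTopologicalGroup G] [T2Space G]
    [LocallyCompactSpace G] [MeasurableSpace G] [BorelSpace G]
    (μ : Measure G) [μ.IsHaarMeasure] [μ.IsMulRightInvariant]
    (act : G →* Equiv.Perm V) (hact : ∀ g : G, act g ∈ X.aut)
    (hcont : ∀ v : V, IsOpen {g : G | act g v = v})
    (hstab : ∀ (k : ℕ) (σ : X.osimp k),
      IsCompact {g : G | X.gAct act hact g σ = σ} ∧ IsOpen {g : G | X.gAct act hact g σ = σ})
    (l k : ℕ) (hlk : l < k)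
    (f : X.osimp l → X.osimp k → ℝ)
    (hinv : ∀ (g : G) (τ : X.osimp l) (σ : X.osimp k),
      f (X.gAct act hact g τ) (X.gAct act hact g σ) = f τ σ)
    (Rk : Finset (X.osimp k)) (hRk : X.IsOrbitReps act hact Rk)
    (Rl : Finset (X.osimp l)) (hRl : X.IsOrbitReps act hact Rl) :
    ∑ σ ∈ Rk, ∑' τ : {τ : X.osimp l // X.OSub τ σ},
        f τ.1 σ / (μ {g : G | X.gAct act hact g σ = σ}).toReal =
      ∑ τ ∈ Rl, ∑' σ : {σ : X.osimp k // X.OSub τ σ},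
        f τ σ.1 / (μ {g : G | X.gAct act hact g τ = τ}).toReal := by
  classical
  have Ifst : ∀ σ : X.osimp k, Fintype {τ : X.osimp l // X.OSub τ σ} :=
    fun σ => @Fintype.ofFinite _ (finite_osub_fst' (l := l) σ)
  have Isnd : ∀ τ : X.osimp l, Fintype {σ : X.osimp k // X.OSub τ σ} :=
    fun τ => @Fintype.ofFinite _ (finite_osub_snd' (k := k) hlf τ)
  have hμpos : ∀ {m : ℕ} (ρ : X.osimp m), 0 < μ {g : G | X.gAct act hact g ρ = ρ} :=
    fun ρ => (hstab _ ρ).2.measure_pos μ ⟨1, gAct_one' ρ⟩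
  have hμlt : ∀ {m : ℕ} (ρ : X.osimp m), μ {g : G | X.gAct act hact g ρ = ρ} < ⊤ :=
    fun ρ => (hstab _ ρ).1.measure_lt_top
  have hμA_top : ∀ (τ₀ τ : X.osimp l) (σ' σ : X.osimp k),
      μ (transA X act hact τ₀ τ σ' σ) ≠ ⊤ := by
    intro τ₀ τ σ' σ
    by_cases hne : ∃ g₀ : G, X.gAct act hact g₀ τ₀ = τ
    · obtain ⟨g₀, hg₀⟩ := hne
      have hsub : transA X act hact τ₀ τ σ' σ ⊆ {g : G | X.gAct act hact g τ₀ = τ} :=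
        fun g hg => hg.1
      refine ne_top_of_le_ne_top ?_ (measure_mono hsub)
      rw [measure_transporter_left' μ hg₀]
      exact (hμlt τ₀).ne
    · have hAe : transA X act hact τ₀ τ σ' σ = ∅ :=
        Set.eq_empty_iff_forall_notMem.mpr fun g hg => hne ⟨g, hg.1⟩
      rw [hAe]; simp
  have claim1 : ∀ (σ : X.osimp k) (τ : X.osimp l), X.OSub τ σ →
      f τ σ / (μ {g : G | X.gAct act hact g σ = σ}).toReal =
        ∑ τ₀ ∈ Rl, ∑' σ' : {σ' : X.osimp k // X.OSub τ₀ σ'},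
          f τ₀ σ'.1 * (μ (transA X act hact τ₀ τ σ'.1 σ)).toReal /
            ((μ {g : G | X.gAct act hact g σ = σ}).toReal *
              (μ {g : G | X.gAct act hact g τ₀ = τ₀}).toReal) := by
    intro σ τ hτσ
    obtain ⟨τs, ⟨hτsRl, g₁, hg₁⟩, huniq⟩ := hRl τ
    have hzero : ∀ τ₀ ∈ Rl, τ₀ ≠ τs →
        (∑' σ' : {σ' : X.osimp k // X.OSub τ₀ σ'},
          f τ₀ σ'.1 * (μ (transA X act hact τ₀ τ σ'.1 σ)).toReal /
            ((μ {g : G | X.gAct act hact g σ = σ}).toReal *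
              (μ {g : G | X.gAct act hact g τ₀ = τ₀}).toReal)) = 0 := by
      intro τ₀ hτ₀Rl hne
      have hAe : ∀ σ' : X.osimp k, transA X act hact τ₀ τ σ' σ = ∅ := by
        intro σ'
        refine Set.eq_empty_iff_forall_notMem.mpr ?_
        rintro g ⟨hg1, hg2⟩
        exact hne (huniq τ₀ ⟨hτ₀Rl, g, hg1⟩)
      have hz : ∀ σ' : {σ' : X.osimp k // X.OSub τ₀ σ'},
          f τ₀ σ'.1 * (μ (transA X act hact τ₀ τ σ'.1 σ)).toReal /
            ((μ {g : G | X.gAct act hact g σ = σ}).toReal *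
              (μ {g : G | X.gAct act hact g τ₀ = τ₀}).toReal) = 0 := by
        intro σ'
        rw [hAe σ'.1]
        simp
      rw [tsum_congr hz, tsum_zero]
    rw [Finset.sum_eq_single_of_mem τs hτsRl hzero]
    letI := Isnd τs
    rw [tsum_fintype]
    have hbb0 : (μ {g : G | X.gAct act hact g τs = τs}).toReal ≠ 0 :=
      ENNReal.toReal_ne_zero.mpr ⟨(hμpos τs).ne', (hμlt τs).ne⟩
    set aa := (μ {g : G | X.gAct act hact g σ = σ}).toReal with haa
    set bb := (μ {g : G | X.gAct act hact g τs = τs}).toReal with hbb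
    have hterm : ∀ σ' : {σ' : X.osimp k // X.OSub τs σ'},
        f τs σ'.1 * (μ (transA X act hact τs τ σ'.1 σ)).toReal / (aa * bb) =
          f τ σ / (aa * bb) * (μ (transA X act hact τs τ σ'.1 σ)).toReal := by
      intro σ'
      rw [div_mul_eq_mul_div]
      congr 1
      rcases Set.eq_empty_or_nonempty (transA X act hact τs τ σ'.1 σ) with hA | ⟨g, hg1, hg2⟩
      · rw [hA]; simp
      · have h2 := hinv g τs σ'.1
        rw [hg1, hg2] at h2
        rw [h2]
    have hsum : (∑ σ' : {σ' : X.osimp k // X.OSub τs σ'},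
        (μ (transA X act hact τs τ σ'.1 σ)).toReal) = bb := by
      rw [← ENNReal.toReal_sum (fun σ' _ => hμA_top τs τ σ'.1 σ),
        partition_L hcont μ τs τ σ hτσ, measure_transporter_left' μ hg₁]
    symm
    calc (∑ σ' : {σ' : X.osimp k // X.OSub τs σ'},
          f τs σ'.1 * (μ (transA X act hact τs τ σ'.1 σ)).toReal / (aa * bb))
        = ∑ σ' : {σ' : X.osimp k // X.OSub τs σ'},
            f τ σ / (aa * bb) * (μ (transA X act hact τs τ σ'.1 σ)).toReal :=
          Finset.sum_congr rfl fun σ' _ => hterm σ'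
      _ = f τ σ / (aa * bb) * ∑ σ' : {σ' : X.osimp k // X.OSub τs σ'},
            (μ (transA X act hact τs τ σ'.1 σ)).toReal := by
          rw [Finset.mul_sum]
      _ = f τ σ / (aa * bb) * bb := by rw [hsum]
      _ = f τ σ / aa := by
          rw [div_mul_eq_mul_div, mul_div_mul_right _ _ hbb0]
  have claim2 : ∀ (τ₀ : X.osimp l) (σ' : X.osimp k), X.OSub τ₀ σ' →
      f τ₀ σ' / (μ {g : G | X.gAct act hact g τ₀ = τ₀}).toReal =
        ∑ σ ∈ Rk, ∑' τ : {τ : X.osimp l // X.OSub τ σ},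
          f τ₀ σ' * (μ (transA X act hact τ₀ τ.1 σ' σ)).toReal /
            ((μ {g : G | X.gAct act hact g σ = σ}).toReal *
              (μ {g : G | X.gAct act hact g τ₀ = τ₀}).toReal) := by
    intro τ₀ σ' hτσ'
    obtain ⟨σs, ⟨hσsRk, g₂, hg₂⟩, huniq⟩ := hRk σ'
    have hzero : ∀ σ ∈ Rk, σ ≠ σs →
        (∑' τ : {τ : X.osimp l // X.OSub τ σ},
          f τ₀ σ' * (μ (transA X act hact τ₀ τ.1 σ' σ)).toReal /
            ((μ {g : G | X.gAct act hact g σ = σ}).toReal *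
              (μ {g : G | X.gAct act hact g τ₀ = τ₀}).toReal)) = 0 := by
      intro σ hσRk hne
      have hAe : ∀ τ : X.osimp l, transA X act hact τ₀ τ σ' σ = ∅ := by
        intro τ
        refine Set.eq_empty_iff_forall_notMem.mpr ?_
        rintro g ⟨hg1, hg2⟩
        exact hne (huniq σ ⟨hσRk, g⁻¹, ((gAct_eq_iff' g σ' σ).mp hg2).symm⟩)
      have hz : ∀ τ : {τ : X.osimp l // X.OSub τ σ},
          f τ₀ σ' * (μ (transA X act hact τ₀ τ.1 σ' σ)).toReal /
            ((μ {g : G | X.gAct act hact g σ = σ}).toReal *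
              (μ {g : G | X.gAct act hact g τ₀ = τ₀}).toReal) = 0 := by
        intro τ
        rw [hAe τ.1]
        simp
      rw [tsum_congr hz, tsum_zero]
    rw [Finset.sum_eq_single_of_mem σs hσsRk hzero]
    letI := Ifst σs
    rw [tsum_fintype]
    have haa0 : (μ {g : G | X.gAct act hact g σs = σs}).toReal ≠ 0 :=
      ENNReal.toReal_ne_zero.mpr ⟨(hμpos σs).ne', (hμlt σs).ne⟩
    set aa := (μ {g : G | X.gAct act hact g σs = σs}).toReal with haa
    set bb := (μ {g : G | X.gAct act hact g τ₀ = τ₀}).toReal with hbb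
    have hsum : (∑ τ : {τ : X.osimp l // X.OSub τ σs},
        (μ (transA X act hact τ₀ τ.1 σ' σs)).toReal) = aa := by
      have hg₂' : X.gAct act hact g₂⁻¹ σ' = σs := ((gAct_eq_iff' g₂ σs σ').mp hg₂).symm
      rw [← ENNReal.toReal_sum (fun τ _ => hμA_top τ₀ τ.1 σ' σs),
        partition_R hcont μ τ₀ σ' σs hτσ', measure_transporter_right' μ hg₂']
    symm
    calc (∑ τ : {τ : X.osimp l // X.OSub τ σs},
          f τ₀ σ' * (μ (transA X act hact τ₀ τ.1 σ' σs)).toReal / (aa * bb))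
        = ∑ τ : {τ : X.osimp l // X.OSub τ σs},
            f τ₀ σ' / (aa * bb) * (μ (transA X act hact τ₀ τ.1 σ' σs)).toReal :=
          Finset.sum_congr rfl fun τ _ => (div_mul_eq_mul_div _ _ _).symm
      _ = f τ₀ σ' / (aa * bb) * ∑ τ : {τ : X.osimp l // X.OSub τ σs},
            (μ (transA X act hact τ₀ τ.1 σ' σs)).toReal := by
          rw [Finset.mul_sum]
      _ = f τ₀ σ' / (aa * bb) * aa := by rw [hsum]
      _ = f τ₀ σ' / bb := by
          rw [div_mul_eq_mul_div, mul_comm (f τ₀ σ') aa, mul_div_mul_left _ _ haa0]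
  calc (∑ σ ∈ Rk, ∑' τ : {τ : X.osimp l // X.OSub τ σ},
        f τ.1 σ / (μ {g : G | X.gAct act hact g σ = σ}).toReal)
      = ∑ σ ∈ Rk, ∑' τ : {τ : X.osimp l // X.OSub τ σ},
          ∑ τ₀ ∈ Rl, ∑' σ' : {σ' : X.osimp k // X.OSub τ₀ σ'},
            f τ₀ σ'.1 * (μ (transA X act hact τ₀ τ.1 σ'.1 σ)).toReal /
              ((μ {g : G | X.gAct act hact g σ = σ}).toReal *
                (μ {g : G | X.gAct act hact g τ₀ = τ₀}).toReal) :=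
        Finset.sum_congr rfl fun σ _ => tsum_congr fun τ => claim1 σ τ.1 τ.2
    _ = ∑ τ₀ ∈ Rl, ∑' σ' : {σ' : X.osimp k // X.OSub τ₀ σ'},
          ∑ σ ∈ Rk, ∑' τ : {τ : X.osimp l // X.OSub τ σ},
            f τ₀ σ'.1 * (μ (transA X act hact τ₀ τ.1 σ'.1 σ)).toReal /
              ((μ {g : G | X.gAct act hact g σ = σ}).toReal *
                (μ {g : G | X.gAct act hact g τ₀ = τ₀}).toReal) :=
        swap_aux Rk Rl Ifst Isnd
          (fun σ τ₀ τ σ' =>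
            f τ₀ σ'.1 * (μ (transA X act hact τ₀ τ.1 σ'.1 σ)).toReal /
              ((μ {g : G | X.gAct act hact g σ = σ}).toReal *
                (μ {g : G | X.gAct act hact g τ₀ = τ₀}).toReal))
    _ = ∑ τ₀ ∈ Rl, ∑' σ' : {σ' : X.osimp k // X.OSub τ₀ σ'},
          f τ₀ σ'.1 / (μ {g : G | X.gAct act hact g τ₀ = τ₀}).toReal :=
        Finset.sum_congr rfl fun τ₀ _ => tsum_congr fun σ' => (claim2 τ₀ σ'.1 σ'.2).symm
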